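/- Let n ≥ 1 and let ψ_n : [-1,1] → [-1,1] be the sawtooth function with n cycles (piecewise linear with slope ±2n, one full cycle on each interval I_i = (-1 + (2i-2)/n, -1 + 2i/n)). If p : ℝ → ℝ is a polynomial of degree at most 2d-1 with n ≥ 2d-1, then ∫_{-1}^{1} (ψ_n(t) - p(t/√d))² dt ≥ (n - 2d + 1)/(3n). -/

import Mathlib

open Finset intervalIntegral
/-- The sawtooth function `ψ_n : ℝ → ℝ` with `n` cycles on `[-1,1]`: piecewise linear
with slope `±2n`, `ψ_n(-1) = 0`, alternating between `-1` and `1` at the points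
`-1 + (2j-1)/(2n)`, and zero outside `[-1,1]`. -/
noncomputable def sawtooth (n : ℕ) (t : ℝ) : ℝ :=
  if |t| ≤ 1 then
    4 * |((n : ℝ) * (t + 1) - 1 / 2) / 2 - round (((n : ℝ) * (t + 1) - 1 / 2) / 2)| - 1
  else 0

namespace SawAux

noncomputable def S (n : ℕ) (t : ℝ) : ℝ :=
  4 * ‖((((n : ℝ) * (t + 1) - 1 / 2) / 2 : ℝ) : UnitAddCircle)‖ - 1

lemma S_continuous (n : ℕ) : Continuous (S n) := by
  have h1 : Continuous fun t : ℝ => ((((n : ℝ) * (t + 1) - 1 / 2) / 2 : ℝ) : UnitAddCircle) :=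
    (AddCircle.continuous_mk' 1).comp (by continuity)
  exact (continuous_const.mul h1.norm).sub continuous_const

lemma sawtooth_eq {n : ℕ} {t : ℝ} (ht : |t| ≤ 1) : sawtooth n t = S n t := by
  rw [sawtooth, if_pos ht, S, UnitAddCircle.norm_eq]

lemma norm_coe (k : ℤ) {y : ℝ} (hy : |y| ≤ 1 / 2) :
    ‖(((k : ℝ) + y : ℝ) : UnitAddCircle)‖ = |y| := by
  rw [UnitAddCircle.norm_eq, round_intCast_add]
  rcases lt_or_eq_of_le ((abs_le.mp hy).2) with h | h
  · rw [round_eq_zero_iff.mpr ⟨(abs_le.mp hy).1, h⟩]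
    push_cast; ring_nf
  · rw [h]
    have hr : round ((1:ℝ) / 2) = 1 := by norm_num [round_eq]
    rw [hr]
    push_cast
    rw [show (k : ℝ) + 1 / 2 - (k + 1) = -(1 / 2) by ring, abs_neg]

/-- grid point -/
noncomputable def pt (n i : ℕ) : ℝ := -1 + 2 * i / n

lemma pt_succ {n : ℕ} (hn : 0 < n) (i : ℕ) : pt n (i + 1) = pt n i + 2 / n := by
  have : (n : ℝ) ≠ 0 := Nat.cast_ne_zero.mpr hn.ne'
  simp only [pt]
  push_cast
  field_simp
  ring

lemma S_rw {n : ℕ} (i : ℕ) {t y : ℝ} (hy : ((n : ℝ) * (t + 1) - 1 / 2) / 2 = (i : ℤ) + y)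
    (h2 : |y| ≤ 1 / 2) : S n t = 4 * |y| - 1 := by
  rw [S, hy, norm_coe _ h2]

lemma S_rw' {n : ℕ} (i : ℕ) {t y : ℝ} (hy : ((n : ℝ) * (t + 1) - 1 / 2) / 2 = ((i + 1 : ℤ) : ℝ) + y)
    (h2 : |y| ≤ 1 / 2) : S n t = 4 * |y| - 1 := by
  rw [S, hy, norm_coe _ h2]

lemma key_expand {n : ℕ} (hn : 0 < n) (i : ℕ) (t : ℝ) :
    ((n : ℝ) * (t + 1) - 1 / 2) / 2 = (i : ℤ) + ((n : ℝ) * (t - pt n i) - 1 / 2) / 2 := by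
  have : (n : ℝ) ≠ 0 := Nat.cast_ne_zero.mpr hn.ne'
  simp only [pt]
  push_cast
  field_simp
  ring

/-- On `[pt i, pt i + 1/(2n)]`, `S` is `-2n(t - pt i)`. -/
lemma S_eq1 {n : ℕ} (hn : 0 < n) (i : ℕ) {t : ℝ} (h1 : pt n i ≤ t)
    (h2 : t ≤ pt n i + 1 / (2 * n)) : S n t = -(2 * n) * (t - pt n i) := by
  have hn' : (0:ℝ) < n := Nat.cast_pos.mpr hn
  set u : ℝ := (n : ℝ) * (t - pt n i) with hu
  have hu1 : 0 ≤ u := by rw [hu]; nlinarith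
  have hu2 : u ≤ 1 / 2 := by
    rw [hu]
    calc (n:ℝ) * (t - pt n i) ≤ (n:ℝ) * (1 / (2 * n)) := by nlinarith
    _ = 1 / 2 := by field_simp
  have hy : |(u - 1 / 2) / 2| ≤ 1 / 2 := by rw [abs_le]; constructor <;> nlinarith
  rw [S_rw i (key_expand hn i t) hy, abs_of_nonpos (by nlinarith)]
  ring

/-- On `[pt i + 1/(2n), pt i + 3/(2n)]`, `S` is `2n(t - pt i) - 2`. -/
lemma S_eq2 {n : ℕ} (hn : 0 < n) (i : ℕ) {t : ℝ} (h1 : pt n i + 1 / (2 * n) ≤ t)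
    (h2 : t ≤ pt n i + 3 / (2 * n)) : S n t = 2 * n * (t - pt n i) - 2 := by
  have hn' : (0:ℝ) < n := Nat.cast_pos.mpr hn
  set u : ℝ := (n : ℝ) * (t - pt n i) with hu
  have hu1 : 1 / 2 ≤ u := by
    rw [hu]
    calc (1:ℝ)/2 = (n:ℝ) * (1 / (2 * n)) := by field_simp
    _ ≤ (n:ℝ) * (t - pt n i) := by nlinarith
  have hu2 : u ≤ 3 / 2 := by
    rw [hu]
    calc (n:ℝ) * (t - pt n i) ≤ (n:ℝ) * (3 / (2 * n)) := by nlinarith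
    _ = 3 / 2 := by field_simp
  have hy : |(u - 1 / 2) / 2| ≤ 1 / 2 := by rw [abs_le]; constructor <;> nlinarith
  rw [S_rw i (key_expand hn i t) hy, abs_of_nonneg (by nlinarith)]
  ring

/-- On `[pt i + 3/(2n), pt i + 2/n]`, `S` is `-2n(t - pt i) + 4`. -/
lemma S_eq3 {n : ℕ} (hn : 0 < n) (i : ℕ) {t : ℝ} (h1 : pt n i + 3 / (2 * n) ≤ t)
    (h2 : t ≤ pt n i + 2 / n) : S n t = -(2 * n) * (t - pt n i) + 4 := by
  have hn' : (0:ℝ) < n := Nat.cast_pos.mpr hn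
  set u : ℝ := (n : ℝ) * (t - pt n i) with hu
  have hu1 : 3 / 2 ≤ u := by
    rw [hu]
    calc (3:ℝ)/2 = (n:ℝ) * (3 / (2 * n)) := by field_simp
    _ ≤ (n:ℝ) * (t - pt n i) := by nlinarith
  have hu2 : u ≤ 2 := by
    rw [hu]
    calc (n:ℝ) * (t - pt n i) ≤ (n:ℝ) * (2 / n) := by nlinarith
    _ = 2 := by field_simp
  have hexp : ((n : ℝ) * (t + 1) - 1 / 2) / 2 = ((i + 1 : ℤ) : ℝ) + ((u - 1 / 2) / 2 - 1) := by
    rw [key_expand hn i t]; push_cast; ring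
  have hy : |(u - 1 / 2) / 2 - 1| ≤ 1 / 2 := by rw [abs_le]; constructor <;> nlinarith
  rw [S_rw' i hexp hy, abs_of_nonpos (by nlinarith)]
  ring

lemma quad_int (A r b c : ℝ) :
    ∫ t in b..c, (A * (t - r)) ^ 2 = A ^ 2 * ((c - r) ^ 3 - (b - r) ^ 3) / 3 := by
  have h : ∀ t : ℝ, (A * (t - r)) ^ 2 = A ^ 2 * (t - r) ^ 2 := fun t => by ring
  simp_rw [h]
  rw [intervalIntegral.integral_const_mul,
    intervalIntegral.integral_comp_sub_right (fun t => t ^ 2) r, integral_pow]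
  push_cast
  ring



set_option maxHeartbeats 1600000 in
lemma key_interval {n : ℕ} (hn : 0 < n) (i : ℕ) (g : ℝ → ℝ) (hg : Continuous g)
    (hsgn : (∀ t ∈ Set.Icc (pt n i) (pt n (i + 1)), 0 ≤ g t) ∨
            (∀ t ∈ Set.Icc (pt n i) (pt n (i + 1)), g t ≤ 0)) :
    1 / (3 * n) ≤ ∫ t in (pt n i)..(pt n (i + 1)), (S n t - g t) ^ 2 := by
  have hn' : (0:ℝ) < n := Nat.cast_pos.mpr hn
  have hn0 : (n:ℝ) ≠ 0 := hn'.ne'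
  have hq : (0:ℝ) < 1 / (2 * n) := by positivity
  have r1 : 1 / (n:ℝ) = 2 * (1 / (2 * n)) := by field_simp
  have r2 : 3 / (2 * (n:ℝ)) = 3 * (1 / (2 * n)) := by ring
  have r3 : 2 / (n:ℝ) = 4 * (1 / (2 * n)) := by field_simp; ring
  have hinv : (n:ℝ) * (1 / n) = 1 := by field_simp
  have hsucc : pt n (i + 1) = pt n i + 2 / n := pt_succ hn i
  have hF : Continuous fun t => (S n t - g t) ^ 2 := ((S_continuous n).sub hg).pow 2
  have hS2 : Continuous fun t => (S n t) ^ 2 := (S_continuous n).pow 2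
  rw [hsucc]
  -- quarter integrals of S^2
  have Q1 : ∫ t in (pt n i)..(pt n i + 1 / (2 * n)), (S n t) ^ 2 = 1 / (6 * n) := by
    rw [intervalIntegral.integral_congr
      (g := fun t => (-(2 * (n:ℝ)) * (t - pt n i)) ^ 2) ?_, quad_int]
    · field_simp; ring
    · intro t ht
      rw [Set.uIcc_of_le (by linarith)] at ht
      simp only
      rw [S_eq1 hn i ht.1 ht.2]
  have Q2 : ∫ t in (pt n i + 1 / (2 * n))..(pt n i + 1 / n), (S n t) ^ 2 = 1 / (6 * n) := by
    rw [intervalIntegral.integral_congr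
      (g := fun t => (2 * (n:ℝ) * (t - (pt n i + 1 / n))) ^ 2) ?_, quad_int]
    · field_simp; ring
    · intro t ht
      rw [Set.uIcc_of_le (by linarith)] at ht
      simp only
      rw [S_eq2 hn i ht.1 (by linarith [ht.2])]
      field_simp; ring
  have Q3 : ∫ t in (pt n i + 1 / n)..(pt n i + 3 / (2 * n)), (S n t) ^ 2 = 1 / (6 * n) := by
    rw [intervalIntegral.integral_congr
      (g := fun t => (2 * (n:ℝ) * (t - (pt n i + 1 / n))) ^ 2) ?_, quad_int]
    · field_simp; ring
    · intro t ht
      rw [Set.uIcc_of_le (by linarith)] at ht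
      simp only
      rw [S_eq2 hn i (by linarith [ht.1]) ht.2]
      field_simp; ring
  have Q4 : ∫ t in (pt n i + 3 / (2 * n))..(pt n i + 2 / n), (S n t) ^ 2 = 1 / (6 * n) := by
    rw [intervalIntegral.integral_congr
      (g := fun t => (-(2 * (n:ℝ)) * (t - (pt n i + 2 / n))) ^ 2) ?_, quad_int]
    · field_simp; ring
    · intro t ht
      rw [Set.uIcc_of_le (by linarith)] at ht
      simp only
      rw [S_eq3 hn i ht.1 ht.2]
      field_simp; ring
  have split : ∫ t in (pt n i)..(pt n i + 2 / n), (S n t - g t) ^ 2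
      = (∫ t in (pt n i)..(pt n i + 1 / n), (S n t - g t) ^ 2)
        + ∫ t in (pt n i + 1 / n)..(pt n i + 2 / n), (S n t - g t) ^ 2 :=
    (intervalIntegral.integral_add_adjacent_intervals (hF.intervalIntegrable _ _)
      (hF.intervalIntegrable _ _)).symm
  rcases hsgn with hg0 | hg0 <;> rw [hsucc] at hg0
  · -- g ≥ 0 : use the down half where S ≤ 0
    have pos2 : 0 ≤ ∫ t in (pt n i + 1 / n)..(pt n i + 2 / n), (S n t - g t) ^ 2 :=
      intervalIntegral.integral_nonneg (by linarith) (fun t _ => sq_nonneg _)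
    have mono : ∫ t in (pt n i)..(pt n i + 1 / n), (S n t) ^ 2
        ≤ ∫ t in (pt n i)..(pt n i + 1 / n), (S n t - g t) ^ 2 := by
      apply intervalIntegral.integral_mono_on (by linarith) (hS2.intervalIntegrable _ _)
        (hF.intervalIntegrable _ _)
      intro t ht
      have hSt : S n t ≤ 0 := by
        rcases le_or_gt t (pt n i + 1 / (2 * n)) with h | h
        · rw [S_eq1 hn i ht.1 h]; nlinarith [ht.1]
        · rw [S_eq2 hn i h.le (by linarith [ht.2])]
          nlinarith [ht.2, hinv]
      have hgt : 0 ≤ g t := hg0 t ⟨ht.1, by linarith [ht.2]⟩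
      nlinarith [mul_nonneg hgt (neg_nonneg.mpr hSt), sq_nonneg (g t)]
    have comp : ∫ t in (pt n i)..(pt n i + 1 / n), (S n t) ^ 2 = 1 / (3 * n) := by
      rw [← intervalIntegral.integral_add_adjacent_intervals (b := pt n i + 1 / (2 * n))
        (hS2.intervalIntegrable _ _) (hS2.intervalIntegrable _ _), Q1, Q2]
      field_simp; ring
    linarith [split, pos2, mono, comp]
  · -- g ≤ 0 : use the up half where S ≥ 0
    have pos2 : 0 ≤ ∫ t in (pt n i)..(pt n i + 1 / n), (S n t - g t) ^ 2 :=
      intervalIntegral.integral_nonneg (by linarith) (fun t _ => sq_nonneg _)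
    have mono : ∫ t in (pt n i + 1 / n)..(pt n i + 2 / n), (S n t) ^ 2
        ≤ ∫ t in (pt n i + 1 / n)..(pt n i + 2 / n), (S n t - g t) ^ 2 := by
      apply intervalIntegral.integral_mono_on (by linarith) (hS2.intervalIntegrable _ _)
        (hF.intervalIntegrable _ _)
      intro t ht
      have hSt : 0 ≤ S n t := by
        rcases le_or_gt t (pt n i + 3 / (2 * n)) with h | h
        · rw [S_eq2 hn i (by linarith [ht.1]) h]
          nlinarith [ht.1, hinv]
        · rw [S_eq3 hn i h.le ht.2]
          nlinarith [ht.2, hinv]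
      have hgt : g t ≤ 0 := hg0 t ⟨by linarith [ht.1], ht.2⟩
      nlinarith [mul_nonneg hSt (neg_nonneg.mpr hgt), sq_nonneg (g t)]
    have comp : ∫ t in (pt n i + 1 / n)..(pt n i + 2 / n), (S n t) ^ 2 = 1 / (3 * n) := by
      rw [← intervalIntegral.integral_add_adjacent_intervals (b := pt n i + 3 / (2 * n))
        (hS2.intervalIntegrable _ _) (hS2.intervalIntegrable _ _), Q3, Q4]
      field_simp; ring
    linarith [split, pos2, mono, comp]



lemma pt_le {n : ℕ} (hn : 0 < n) {i j : ℕ} (h : i ≤ j) : pt n i ≤ pt n j := by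
  have hn' : (0:ℝ) < n := Nat.cast_pos.mpr hn
  have : (i:ℝ) ≤ j := Nat.cast_le.mpr h
  unfold pt
  gcongr

lemma exists_good (n d : ℕ) (hn : 0 < n) (hd : 1 ≤ d) (p : Polynomial ℝ)
    (hp : p.natDegree ≤ 2 * d - 1) :
    ∃ G : Finset ℕ, G ⊆ Finset.range n ∧ n - (2 * d - 1) ≤ G.card ∧
      ∀ i ∈ G, (∀ t ∈ Set.Icc (pt n i) (pt n (i + 1)), 0 ≤ p.eval (t / Real.sqrt d)) ∨
               (∀ t ∈ Set.Icc (pt n i) (pt n (i + 1)), p.eval (t / Real.sqrt d) ≤ 0) := by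
  classical
  have hn' : (0:ℝ) < n := Nat.cast_pos.mpr hn
  set g : ℝ → ℝ := fun t => p.eval (t / Real.sqrt d) with hgdef
  have hgc : Continuous g := (Polynomial.continuous p).comp (continuous_id.div_const _)
  by_cases hp0 : p = 0
  · refine ⟨Finset.range n, subset_rfl, ?_, fun i _ => Or.inl fun t _ => ?_⟩
    · rw [Finset.card_range]; exact Nat.sub_le _ _
    · simp [hp0]
  · set B : Finset ℕ := (Finset.range n).filter
      (fun i => ∃ t, t ∈ Set.Ioo (pt n i) (pt n (i + 1)) ∧ g t = 0) with hB
    refine ⟨Finset.range n \ B, Finset.sdiff_subset, ?_, ?_⟩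
    · -- cardinality
      have hsd : Real.sqrt d ≠ 0 := by
        rw [Real.sqrt_ne_zero']
        exact_mod_cast hd
      set q : Polynomial ℝ := p.comp (Polynomial.C (Real.sqrt d)⁻¹ * Polynomial.X) with hqdef
      have hqe : ∀ t, q.eval t = g t := by
        intro t
        simp only [hqdef, hgdef, Polynomial.eval_comp, Polynomial.eval_mul, Polynomial.eval_C,
          Polynomial.eval_X]
        rw [div_eq_mul_inv, mul_comm]
      have hq0 : q ≠ 0 := by
        intro h
        apply hp0
        apply Polynomial.funext
        intro y
        have h1 := hqe (y * Real.sqrt d)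
        rw [h, Polynomial.eval_zero] at h1
        have : p.eval (y * Real.sqrt d / Real.sqrt d) = 0 := h1.symm
        rwa [mul_div_cancel_right₀ _ hsd, ← Polynomial.eval_zero (x := y)] at this
      have hqdeg : q.natDegree ≤ 2 * d - 1 := by
        rw [hqdef, Polynomial.natDegree_comp,
          Polynomial.natDegree_C_mul_X _ (inv_ne_zero hsd), mul_one]
        exact hp
      have hex : ∀ i, ∃ t, i ∈ B → (t ∈ Set.Ioo (pt n i) (pt n (i + 1)) ∧ g t = 0) := by
        intro i
        by_cases h : i ∈ B
        · rw [hB, Finset.mem_filter] at h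
          obtain ⟨t, ht⟩ := h.2
          exact ⟨t, fun _ => ht⟩
        · exact ⟨0, fun h' => absurd h' h⟩
      choose f hf using hex
      have hcard : B.card ≤ 2 * d - 1 := by
        calc B.card ≤ q.roots.toFinset.card := by
              apply Finset.card_le_card_of_injOn f
              · intro i hi
                rw [Finset.mem_coe, Multiset.mem_toFinset, Polynomial.mem_roots']
                exact ⟨hq0, by rw [Polynomial.IsRoot, hqe]; exact (hf i hi).2⟩
              · intro i hi j hj hij
                by_contra hne
                rcases Nat.lt_or_ge i j with h | h
                · have h1 : f i < pt n (i + 1) := (hf i hi).1.2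
                  have h2 : pt n j < f j := (hf j hj).1.1
                  have h3 : pt n (i + 1) ≤ pt n j := pt_le hn h
                  rw [hij] at h1; linarith
                · have hji : j < i := lt_of_le_of_ne h fun e => hne e.symm
                  have h1 : f j < pt n (j + 1) := (hf j hj).1.2
                  have h2 : pt n i < f i := (hf i hi).1.1
                  have h3 : pt n (j + 1) ≤ pt n i := pt_le hn hji
                  rw [hij] at h2; linarith
          _ ≤ Multiset.card q.roots := q.roots.toFinset_card_le
          _ ≤ q.natDegree := q.card_roots'
          _ ≤ 2 * d - 1 := hqdeg
      have hBsub : B ⊆ Finset.range n := Finset.filter_subset _ _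
      rw [Finset.card_sdiff_of_subset hBsub, Finset.card_range]
      exact Nat.sub_le_sub_left hcard n
    · -- sign condition on good intervals
      intro i hi
      rw [Finset.mem_sdiff, hB, Finset.mem_filter] at hi
      have hroot : ∀ t ∈ Set.Ioo (pt n i) (pt n (i + 1)), g t ≠ 0 := by
        intro t ht h0
        exact hi.2 ⟨hi.1, t, ht, h0⟩
      have hab : pt n i < pt n (i + 1) := by
        rw [pt_succ hn i]
        have : (0:ℝ) < 2 / n := by positivity
        linarith
      set m : ℝ := (pt n i + pt n (i + 1)) / 2 with hm
      have hmIoo : m ∈ Set.Ioo (pt n i) (pt n (i + 1)) := ⟨by rw [hm]; linarith, by rw [hm]; linarith⟩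
      have key : ∀ s : ℝ → Prop, True := fun _ => trivial
      have dich : (∀ t ∈ Set.Ioo (pt n i) (pt n (i + 1)), 0 < g t) ∨
          (∀ t ∈ Set.Ioo (pt n i) (pt n (i + 1)), g t < 0) := by
        rcases lt_trichotomy (g m) 0 with h | h | h
        · right
          intro t ht
          rcases lt_trichotomy (g t) 0 with h' | h' | h'
          · exact h'
          · exact absurd h' (hroot t ht)
          · exfalso
            have h0 : (0:ℝ) ∈ Set.uIcc (g t) (g m) := by
              rw [Set.mem_uIcc]; right; exact ⟨h.le, h'.le⟩
            obtain ⟨z, hz, hz0⟩ := intermediate_value_uIcc hgc.continuousOn h0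
            have hzIoo : z ∈ Set.Ioo (pt n i) (pt n (i + 1)) :=
              Set.ordConnected_Ioo.uIcc_subset ht hmIoo hz
            exact hroot z hzIoo hz0
        · exact absurd h (hroot m hmIoo)
        · left
          intro t ht
          rcases lt_trichotomy (g t) 0 with h' | h' | h'
          · exfalso
            have h0 : (0:ℝ) ∈ Set.uIcc (g t) (g m) := by
              rw [Set.mem_uIcc]; left; exact ⟨h'.le, h.le⟩
            obtain ⟨z, hz, hz0⟩ := intermediate_value_uIcc hgc.continuousOn h0
            have hzIoo : z ∈ Set.Ioo (pt n i) (pt n (i + 1)) :=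
              Set.ordConnected_Ioo.uIcc_subset ht hmIoo hz
            exact hroot z hzIoo hz0
          · exact absurd h' (hroot t ht)
          · exact h'
      rcases dich with hpos | hneg
      · left
        have hclosed : IsClosed {t : ℝ | 0 ≤ g t} := isClosed_le continuous_const hgc
        have hsub : Set.Ioo (pt n i) (pt n (i + 1)) ⊆ {t : ℝ | 0 ≤ g t} :=
          fun t ht => (hpos t ht).le
        have := closure_minimal hsub hclosed
        rw [closure_Ioo hab.ne] at this
        exact fun t ht => this ht
      · right
        have hclosed : IsClosed {t : ℝ | g t ≤ 0} := isClosed_le hgc continuous_const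
        have hsub : Set.Ioo (pt n i) (pt n (i + 1)) ⊆ {t : ℝ | g t ≤ 0} :=
          fun t ht => (hneg t ht).le
        have := closure_minimal hsub hclosed
        rw [closure_Ioo hab.ne] at this
        exact fun t ht => this ht

end SawAux

/-- If `p` is a polynomial of degree at most `2d-1` and `n ≥ 2d-1`, then
`∫_{-1}^{1} (ψ_n(t) - p(t/√d))² dt ≥ (n - 2d + 1)/(3n)`. -/
theorem sawtooth_far_from_polynomial (n d : ℕ) (hn : 1 ≤ n) (hd : 1 ≤ d)
    (hnd : 2 * d - 1 ≤ n) (p : Polynomial ℝ) (hp : p.natDegree ≤ 2 * d - 1) :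
    ∫ t in (-1 : ℝ)..1, (sawtooth n t - p.eval (t / Real.sqrt d)) ^ 2
      ≥ ((n : ℝ) - 2 * d + 1) / (3 * n) := by
  have hn0 : 0 < n := hn
  have hn' : (0:ℝ) < n := Nat.cast_pos.mpr hn0
  have hgc : Continuous fun t : ℝ => p.eval (t / Real.sqrt d) :=
    (Polynomial.continuous p).comp (continuous_id.div_const _)
  have hFc : Continuous fun t => (SawAux.S n t - p.eval (t / Real.sqrt d)) ^ 2 :=
    ((SawAux.S_continuous n).sub hgc).pow 2
  rw [ge_iff_le]
  have hcong : ∫ t in (-1:ℝ)..1, (sawtooth n t - p.eval (t / Real.sqrt d)) ^ 2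
      = ∫ t in (-1:ℝ)..1, (SawAux.S n t - p.eval (t / Real.sqrt d)) ^ 2 := by
    apply intervalIntegral.integral_congr
    intro t ht
    rw [Set.uIcc_of_le (by norm_num : (-1:ℝ) ≤ 1)] at ht
    simp only
    rw [SawAux.sawtooth_eq (abs_le.mpr ⟨ht.1, ht.2⟩)]
  rw [hcong]
  have hpt0 : SawAux.pt n 0 = -1 := by simp [SawAux.pt]
  have hptn : SawAux.pt n n = 1 := by
    rw [SawAux.pt]
    field_simp
    norm_num
  have hsum : ∑ i ∈ Finset.range n, ∫ t in (SawAux.pt n i)..(SawAux.pt n (i + 1)),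
      (SawAux.S n t - p.eval (t / Real.sqrt d)) ^ 2
      = ∫ t in (SawAux.pt n 0)..(SawAux.pt n n),
        (SawAux.S n t - p.eval (t / Real.sqrt d)) ^ 2 :=
    intervalIntegral.sum_integral_adjacent_intervals (fun k _ => hFc.intervalIntegrable _ _)
  rw [hpt0, hptn] at hsum
  rw [← hsum]
  obtain ⟨G, hGsub, hGcard, hGgood⟩ := SawAux.exists_good n d hn0 hd p hp
  have ecast : ((n - (2 * d - 1) : ℕ) : ℝ) = (n:ℝ) - 2 * d + 1 := by
    have h1 : (1:ℕ) ≤ 2 * d := by omega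
    push_cast [Nat.cast_sub hnd, Nat.cast_sub h1]
    ring
  calc ((n:ℝ) - 2 * d + 1) / (3 * n) ≤ (G.card : ℝ) / (3 * n) := by
        gcongr
        rw [← ecast]
        exact_mod_cast hGcard
    _ = ∑ _i ∈ G, 1 / (3 * (n:ℝ)) := by rw [Finset.sum_const, nsmul_eq_mul]; ring
    _ ≤ ∑ i ∈ G, ∫ t in (SawAux.pt n i)..(SawAux.pt n (i + 1)),
          (SawAux.S n t - p.eval (t / Real.sqrt d)) ^ 2 :=
        Finset.sum_le_sum fun i hi => SawAux.key_interval hn0 i _ hgc (hGgood i hi)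
    _ ≤ ∑ i ∈ Finset.range n, ∫ t in (SawAux.pt n i)..(SawAux.pt n (i + 1)),
          (SawAux.S n t - p.eval (t / Real.sqrt d)) ^ 2 :=
        Finset.sum_le_sum_of_subset_of_nonneg hGsub fun i _ _ =>
          intervalIntegral.integral_nonneg (SawAux.pt_le hn0 (Nat.le_succ i))
            fun t _ => sq_nonneg _
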